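/- Let t be a positive integer and let G be a bipartite graph with vertex bipartition (P, Q) such that |Q| > ℓ·t, where ℓ is the size of a maximum matching of G, and such that Q contains no isolated vertices. Then there exist nonempty vertex sets X ⊆ P and Y ⊆ Q, a vertex w ∈ Y, and a t-expansion M of X into Y, such that no vertex of Y has a neighbour outside X and no edge of M is incident with w. -/

import Mathlib

open SimpleGraph

variable {V : Type*}

/-- A `T`-triangle, represented as its vertex set: three pairwise adjacent
vertices at least one of which is a terminal. -/
def IsTTriangle (G : SimpleGraph V) (T Δ : Set V) : Prop :=
  ∃ a b c : V, Δ = {a, b, c} ∧ G.Adj a b ∧ G.Adj a c ∧ G.Adj b c ∧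
    (a ∈ T ∨ b ∈ T ∨ c ∈ T)

/-- The induced subgraph `G − S` contains a `T`-triangle. -/
def HasTTriangleAvoiding (G : SimpleGraph V) (T S : Set V) : Prop :=
  ∃ Δ : Set V, IsTTriangle G T Δ ∧ Δ ∩ S = ∅

/-- The induced subgraph `G − S` contains a `T`-cycle: a cycle of `G` avoiding
`S` and passing through a vertex of `T`. -/
def HasTCycleAvoiding (G : SimpleGraph V) (T S : Set V) : Prop :=
  ∃ (v : V) (c : G.Walk v v), c.IsCycle ∧ (∀ x ∈ c.support, x ∉ S) ∧
    ∃ t ∈ T, t ∈ c.support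

/-- `S` is a subset feedback vertex set of `G` with respect to `T`:
`G − S` contains no `T`-cycle. -/
def IsSubsetFVS (G : SimpleGraph V) (T S : Set V) : Prop :=
  ¬ HasTCycleAvoiding G T S

/-- A cycle has a chord: an edge of `G` between two vertices of the cycle
which is not an edge of the cycle. -/
def WalkHasChord (G : SimpleGraph V) {v : V} (c : G.Walk v v) : Prop :=
  ∃ x y : V, x ∈ c.support ∧ y ∈ c.support ∧ G.Adj x y ∧ s(x, y) ∉ c.edges

/-- A graph is chordal if every cycle of length at least four has a chord. -/
def Chordal (G : SimpleGraph V) : Prop :=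
  ∀ (v : V) (c : G.Walk v v), c.IsCycle → 4 ≤ c.length → WalkHasChord G c

/-- A bridge: an edge lying on no cycle of the graph. -/
def IsBridgeEdge (G : SimpleGraph V) (e : Sym2 V) : Prop :=
  e ∈ G.edgeSet ∧ ∀ (v : V) (c : G.Walk v v), c.IsCycle → e ∉ c.edges

/-- `(K, I)` is a split partition of `G`: `K` is a clique, `I` an independent
set, and they partition the vertex set. -/
def IsSplitPartition (G : SimpleGraph V) (K I : Set V) : Prop :=
  K ∪ I = Set.univ ∧ K ∩ I = ∅ ∧ G.IsClique K ∧ I.Pairwise fun a b => ¬ G.Adj a b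

/-- The closed neighbourhood `N[v]` of a vertex. -/
def closedNbhd (G : SimpleGraph V) (v : V) : Set V := insert v (G.neighborSet v)

/-- A vertex is simplicial if its closed neighbourhood is a clique. -/
def IsSimplicial (G : SimpleGraph V) (v : V) : Prop := G.IsClique (closedNbhd G v)

/-- A maximal clique. -/
def IsMaxClique (G : SimpleGraph V) (C : Set V) : Prop :=
  G.IsClique C ∧ ∀ C' : Set V, G.IsClique C' → C ⊆ C' → C' = C

/-- A matching, as a set of edges of `G` no two of which share an endvertex. -/
def IsEdgeMatching (G : SimpleGraph V) (M : Set (Sym2 V)) : Prop :=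
  M ⊆ G.edgeSet ∧ ∀ e ∈ M, ∀ f ∈ M, e ≠ f → ∀ z : V, z ∈ e → z ∉ f

/-- A set of edges saturates a vertex if some edge of it is incident with it. -/
def Saturates (M : Set (Sym2 V)) (z : V) : Prop := ∃ e ∈ M, z ∈ e

/-- `M` is a `t`-expansion of `X` into `Y`: every edge of `M` goes between `X`
and `Y`, every vertex of `X` is incident with exactly `t` edges of `M`, and the
edges of `M` are incident with exactly `t * |X|` distinct vertices of `Y`. -/
def IsExpansion (G : SimpleGraph V) (t : ℕ) (X Y : Set V) (M : Set (Sym2 V)) : Prop :=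
  M ⊆ G.edgeSet ∧ (∀ e ∈ M, ∃ x ∈ X, ∃ y ∈ Y, e = s(x, y)) ∧
    (∀ x ∈ X, {e ∈ M | x ∈ e}.ncard = t) ∧
    {y ∈ Y | Saturates M y}.ncard = t * X.ncard

set_option linter.unusedSectionVars false

namespace Stmt5Aux

variable {V : Type} [Fintype V]

/-- endpoint of an alternating chain (most recent step first) -/
def ept (q₀ : V) : List (V × V) → V
  | [] => q₀
  | pr :: _ => pr.2

@[simp] lemma ept_nil (q₀ : V) : ept q₀ [] = q₀ := rfl

@[simp] lemma ept_cons (q₀ p q : V) (L : List (V × V)) : ept q₀ ((p, q) :: L) = q := rfl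

/-- Alternating chains w.r.t. a `t`-matching `M`, starting at `q₀`. -/
inductive AC (G : SimpleGraph V) (M : Set (Sym2 V)) (q₀ : V) : List (V × V) → Prop
  | nil : AC G M q₀ []
  | cons {L : List (V × V)} {p q' : V} : AC G M q₀ L → G.Adj (ept q₀ L) p →
      s(ept q₀ L, p) ∉ M → s(p, q') ∈ M → AC G M q₀ ((p, q') :: L)

/-- `t`-matching: edges of `G`, each `Q`-vertex on at most one edge,
each non-`Q` vertex on at most `t` edges. -/
def TM (G : SimpleGraph V) (Q : Set V) (t : ℕ) (M : Set (Sym2 V)) : Prop :=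
  M ⊆ G.edgeSet ∧
  (∀ q ∈ Q, ∀ e ∈ M, ∀ f ∈ M, q ∈ e → q ∈ f → e = f) ∧
  (∀ p : V, p ∉ Q → {e ∈ M | p ∈ e}.ncard ≤ t)

lemma ac_suffix {G : SimpleGraph V} {M : Set (Sym2 V)} {q₀ : V} (A : List (V × V))
    {B : List (V × V)} (h : AC G M q₀ (A ++ B)) : AC G M q₀ B := by
  induction A with
  | nil => simpa using h
  | cons x A ih =>
    rw [List.cons_append] at h
    cases h with
    | cons h1 _ _ _ => exact ih h1

lemma ac_trim {G : SimpleGraph V} {M : Set (Sym2 V)} {q₀ : V} {L : List (V × V)}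
    (h : AC G M q₀ L) :
    ∃ L', AC G M q₀ L' ∧ ept q₀ L' = ept q₀ L ∧ (L'.map Prod.snd).Nodup ∧
      q₀ ∉ L'.map Prod.snd := by
  induction h with
  | nil => exact ⟨[], AC.nil, rfl, by simp, by simp⟩
  | @cons L p q' h1 hadj hne hmem ih =>
    obtain ⟨L', hAC, hept, hnd, hq0⟩ := ih
    by_cases hq : q' = q₀
    · exact ⟨[], AC.nil, by simp [ept, hq], by simp, by simp⟩
    · by_cases hmem' : q' ∈ L'.map Prod.snd
      · obtain ⟨pr, hpr, hpr2⟩ := List.mem_map.mp hmem'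
        obtain ⟨A, B, hAB⟩ := List.append_of_mem hpr
        have hsub : ((pr :: B).map Prod.snd).Sublist (L'.map Prod.snd) := by
          rw [hAB]; exact (List.sublist_append_right A _).map _
        refine ⟨pr :: B, ac_suffix A (hAB ▸ hAC), by simp [ept, hpr2], hnd.sublist hsub,
          fun hc => hq0 (hsub.subset hc)⟩
      · refine ⟨(p, q') :: L', ?_, rfl, ?_, ?_⟩
        · rw [← hept] at hadj hne
          exact AC.cons hAC hadj hne hmem
        · rw [List.map_cons, List.nodup_cons]; exact ⟨hmem', hnd⟩
        · simp only [List.map_cons, List.mem_cons, not_or]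
          exact ⟨fun hc => hq hc.symm, hq0⟩

lemma ac_sets {G : SimpleGraph V} {P Q : Set V} {M : Set (Sym2 V)} {q₀ : V}
    (hbip : ∀ u v : V, G.Adj u v → (u ∈ P ∧ v ∈ Q) ∨ (u ∈ Q ∧ v ∈ P))
    (hdisj : P ∩ Q = ∅) (hME : M ⊆ G.edgeSet) (hq₀ : q₀ ∈ Q)
    {L : List (V × V)} (h : AC G M q₀ L) :
    ept q₀ L ∈ Q ∧ ∀ pr ∈ L, pr.1 ∈ P ∧ pr.2 ∈ Q := by
  have hPQ : ∀ x, x ∈ P → x ∈ Q → False := fun x h1 h2 =>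
    Set.eq_empty_iff_forall_notMem.mp hdisj x ⟨h1, h2⟩
  induction h with
  | nil => exact ⟨hq₀, by simp⟩
  | @cons L p q' h1 hadj hne hmem ih =>
    obtain ⟨hQe, hall⟩ := ih
    have hp : p ∈ P := by
      rcases hbip _ _ hadj with ⟨h2, _⟩ | ⟨_, h3⟩
      · exact (hPQ _ h2 hQe).elim
      · exact h3
    have hq' : q' ∈ Q := by
      have hE := hME hmem
      rw [SimpleGraph.mem_edgeSet] at hE
      rcases hbip _ _ hE with ⟨_, h3⟩ | ⟨h2, _⟩
      · exact h3
      · exact (hPQ _ hp h2).elim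
    refine ⟨hq', ?_⟩
    intro pr hpr
    rw [List.mem_cons] at hpr
    rcases hpr with rfl | hpr
    · exact ⟨hp, hq'⟩
    · exact hall pr hpr

lemma flip {G : SimpleGraph V} {P Q : Set V} {t : ℕ} {M : Set (Sym2 V)} {q₀ : V}
    (hbip : ∀ u v : V, G.Adj u v → (u ∈ P ∧ v ∈ Q) ∨ (u ∈ Q ∧ v ∈ P))
    (hdisj : P ∩ Q = ∅) (hM : TM G Q t M) (hq₀ : q₀ ∈ Q) (hunsat : ¬ Saturates M q₀)
    {L : List (V × V)} (h : AC G M q₀ L) :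
    (L.map Prod.snd).Nodup → q₀ ∉ L.map Prod.snd →
    ∃ N, TM G Q t N ∧ N.ncard = M.ncard ∧
      (∀ z, z ∉ Q → {e ∈ N | z ∈ e}.ncard = {e ∈ M | z ∈ e}.ncard) ∧
      ¬ Saturates N (ept q₀ L) ∧
      (∀ z ∈ Q, z ∉ q₀ :: L.map Prod.snd → {e ∈ N | z ∈ e} = {e ∈ M | z ∈ e}) := by
  have hPQ : ∀ x, x ∈ P → x ∈ Q → False := fun x h1 h2 =>
    Set.eq_empty_iff_forall_notMem.mp hdisj x ⟨h1, h2⟩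
  induction h with
  | nil => exact fun _ _ => ⟨M, hM, rfl, fun _ _ => rfl, hunsat, fun _ _ _ => rfl⟩
  | @cons L p q' h1 hadj hne hmem ih =>
    intro hnd hq0
    simp only [List.map_cons, List.nodup_cons] at hnd
    simp only [List.map_cons, List.mem_cons, not_or] at hq0
    obtain ⟨hq'L, hnd'⟩ := hnd
    obtain ⟨hq0q', hq0L⟩ := hq0
    obtain ⟨N, hNtm, hNcard, hNdeg, hNsat, hNagr⟩ := ih hnd' hq0L
    obtain ⟨hqQ, _⟩ := ac_sets hbip hdisj hM.1 hq₀ h1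
    obtain ⟨_, hall⟩ := ac_sets hbip hdisj hM.1 hq₀ (AC.cons h1 hadj hne hmem)
    obtain ⟨hpP, hq'Q⟩ := hall (p, q') (List.mem_cons_self)
    have hpQ : p ∉ Q := fun hc => hPQ p hpP hc
    have hqmem : ept q₀ L ∈ q₀ :: L.map Prod.snd := by
      cases L with
      | nil => simp [ept]
      | cons x L => simp [ept]
    have hq'ne : q' ∉ q₀ :: L.map Prod.snd := by
      simp only [List.mem_cons, not_or]
      exact ⟨fun hc => hq0q' hc.symm, hq'L⟩
    have hqq' : ept q₀ L ≠ q' := fun hc => hq'ne (hc ▸ hqmem)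
    have hMq' : {e ∈ M | q' ∈ e} = {s(p, q')} := by
      ext f
      constructor
      · rintro ⟨hf, hq'f⟩
        exact hM.2.1 q' hq'Q f hf _ hmem hq'f (by simp)
      · intro hf
        rw [Set.mem_singleton_iff] at hf
        subst hf
        exact ⟨hmem, by simp⟩
    have hNq' : {e ∈ N | q' ∈ e} = {s(p, q')} := (hNagr q' hq'Q hq'ne).trans hMq'
    have hbN : s(p, q') ∈ N := by
      have hx : s(p, q') ∈ ({s(p, q')} : Set (Sym2 V)) := rfl
      rw [← hNq'] at hx
      exact hx.1
    have haN : s(ept q₀ L, p) ∉ N := fun hc => hNsat ⟨_, hc, by simp⟩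
    have hab : s(ept q₀ L, p) ≠ s(p, q') := by
      intro hc
      rw [Sym2.eq_iff] at hc
      rcases hc with ⟨h1', _⟩ | ⟨h1', _⟩
      · exact hpQ (h1' ▸ hqQ)
      · exact hqq' h1'
    have huntouched : ∀ z, z ≠ ept q₀ L → z ≠ p → z ≠ q' →
        {e ∈ insert s(ept q₀ L, p) (N \ {s(p, q')}) | z ∈ e} = {e ∈ N | z ∈ e} := by
      intro z hz1 hz2 hz3
      ext f
      simp only [Set.mem_setOf_eq, Set.mem_insert_iff, Set.mem_diff, Set.mem_singleton_iff]
      constructor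
      · rintro ⟨(rfl | ⟨hfN, _⟩), hz⟩
        · rcases Sym2.mem_iff.mp hz with h | h
          exacts [absurd h hz1, absurd h hz2]
        · exact ⟨hfN, hz⟩
      · rintro ⟨hfN, hz⟩
        refine ⟨Or.inr ⟨hfN, ?_⟩, hz⟩
        rintro rfl
        rcases Sym2.mem_iff.mp hz with h | h
        exacts [hz2 h, hz3 h]
    have hstar_p : {e ∈ insert s(ept q₀ L, p) (N \ {s(p, q')}) | p ∈ e}
        = insert s(ept q₀ L, p) ({e ∈ N | p ∈ e} \ {s(p, q')}) := by
      ext f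
      simp only [Set.mem_setOf_eq, Set.mem_insert_iff, Set.mem_diff, Set.mem_singleton_iff]
      constructor
      · rintro ⟨(rfl | ⟨h1', h2'⟩), hp⟩
        · exact Or.inl rfl
        · exact Or.inr ⟨⟨h1', hp⟩, h2'⟩
      · rintro (rfl | ⟨⟨h1', hp⟩, h2'⟩)
        · exact ⟨Or.inl rfl, by simp⟩
        · exact ⟨Or.inr ⟨h1', h2'⟩, hp⟩
    have hbstar : s(p, q') ∈ {e ∈ N | p ∈ e} := ⟨hbN, by simp⟩
    have hanotin : s(ept q₀ L, p) ∉ {e ∈ N | p ∈ e} \ {s(p, q')} := fun hc => haN hc.1.1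
    have hdegN : ∀ z, z ∉ Q →
        {e ∈ insert s(ept q₀ L, p) (N \ {s(p, q')}) | z ∈ e}.ncard = {e ∈ N | z ∈ e}.ncard := by
      intro z hz
      by_cases hzp : z = p
      · subst hzp
        rw [hstar_p, Set.ncard_insert_of_notMem hanotin,
          Set.ncard_diff_singleton_add_one hbstar]
      · rw [huntouched z (fun hc => hz (hc ▸ hqQ)) hzp (fun hc => hz (hc ▸ hq'Q))]
    refine ⟨insert s(ept q₀ L, p) (N \ {s(p, q')}), ⟨?_, ?_, ?_⟩, ?_, ?_, ?_, ?_⟩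
    · rw [Set.insert_subset_iff]
      exact ⟨G.mem_edgeSet.mpr hadj, (Set.diff_subset).trans hNtm.1⟩
    · intro z hz e he f hf hze hzf
      rcases Set.mem_insert_iff.mp he with rfl | he'
      · rcases Set.mem_insert_iff.mp hf with rfl | hf'
        · rfl
        · exfalso
          have hzq : z = ept q₀ L := by
            rcases Sym2.mem_iff.mp hze with h | h
            · exact h
            · exact absurd (h ▸ hz) hpQ
          exact hNsat ⟨f, hf'.1, hzq ▸ hzf⟩
      · rcases Set.mem_insert_iff.mp hf with rfl | hf'
        · exfalso
          have hzq : z = ept q₀ L := by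
            rcases Sym2.mem_iff.mp hzf with h | h
            · exact h
            · exact absurd (h ▸ hz) hpQ
          exact hNsat ⟨e, he'.1, hzq ▸ hze⟩
        · exact hNtm.2.1 z hz e he'.1 f hf'.1 hze hzf
    · intro z hz
      rw [hdegN z hz]
      exact hNtm.2.2 z hz
    · rw [Set.ncard_insert_of_notMem (fun hc => haN hc.1),
        Set.ncard_diff_singleton_add_one hbN, hNcard]
    · intro z hz
      rw [hdegN z hz, hNdeg z hz]
    · show ¬ Saturates _ q'
      rintro ⟨e, he, hq'e⟩
      rcases Set.mem_insert_iff.mp he with rfl | he'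
      · rcases Sym2.mem_iff.mp hq'e with h | h
        · exact hqq' h.symm
        · exact hpQ (h ▸ hq'Q)
      · have hx : e ∈ {e ∈ N | q' ∈ e} := ⟨he'.1, hq'e⟩
        rw [hNq'] at hx
        exact he'.2 hx
    · intro z hzQ hzmem
      simp only [List.map_cons, List.mem_cons, not_or] at hzmem
      obtain ⟨hz1, hz2, hz3⟩ := hzmem
      have hzq : z ≠ ept q₀ L := by
        intro hc
        rcases List.mem_cons.mp (hc ▸ hqmem) with h | h
        · exact hz1 h
        · exact hz3 h
      rw [huntouched z hzq (fun hc => hPQ z (hc ▸ hpP) hzQ) hz2]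
      refine hNagr z hzQ ?_
      simp only [List.mem_cons, not_or]
      exact ⟨hz1, hz3⟩

lemma reach_deg {G : SimpleGraph V} {P Q : Set V} {t : ℕ} {M : Set (Sym2 V)} {q₀ : V}
    (hbip : ∀ u v : V, G.Adj u v → (u ∈ P ∧ v ∈ Q) ∨ (u ∈ Q ∧ v ∈ P))
    (hdisj : P ∩ Q = ∅) (hM : TM G Q t M) (hq₀ : q₀ ∈ Q) (hunsat : ¬ Saturates M q₀)
    (hmax : ∀ N, TM G Q t N → N.ncard ≤ M.ncard)
    {L : List (V × V)} {p : V} (h : AC G M q₀ L) (hadj : G.Adj (ept q₀ L) p) :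
    {e ∈ M | p ∈ e}.ncard = t := by
  have hPQ : ∀ x, x ∈ P → x ∈ Q → False := fun x h1 h2 =>
    Set.eq_empty_iff_forall_notMem.mp hdisj x ⟨h1, h2⟩
  obtain ⟨L', hL', hept, hnd, hq0⟩ := ac_trim h
  obtain ⟨N, hNtm, hNcard, hNdeg, hNsat, -⟩ := flip hbip hdisj hM hq₀ hunsat hL' hnd hq0
  rw [hept] at hNsat
  have hqQ : ept q₀ L ∈ Q := (ac_sets hbip hdisj hM.1 hq₀ h).1
  have hpP : p ∈ P := by
    rcases hbip _ _ hadj with ⟨h2, _⟩ | ⟨_, h3⟩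
    · exact (hPQ _ h2 hqQ).elim
    · exact h3
  have hpQ : p ∉ Q := fun hc => hPQ p hpP hc
  have haN : s(ept q₀ L, p) ∉ N := fun hc => hNsat ⟨_, hc, by simp⟩
  have hle : {e ∈ N | p ∈ e}.ncard ≤ t := hNtm.2.2 p hpQ
  rcases lt_or_eq_of_le hle with hlt | heqt
  · exfalso
    have hstar : {e ∈ insert s(ept q₀ L, p) N | p ∈ e}
        = insert s(ept q₀ L, p) {e ∈ N | p ∈ e} := by
      ext f
      simp only [Set.mem_setOf_eq, Set.mem_insert_iff]
      constructor
      · rintro ⟨rfl | h1, hp⟩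
        · exact Or.inl rfl
        · exact Or.inr ⟨h1, hp⟩
      · rintro (rfl | ⟨h1, hp⟩)
        · exact ⟨Or.inl rfl, by simp⟩
        · exact ⟨Or.inr h1, hp⟩
    have hN'tm : TM G Q t (insert s(ept q₀ L, p) N) := by
      refine ⟨?_, ?_, ?_⟩
      · rw [Set.insert_subset_iff]
        exact ⟨G.mem_edgeSet.mpr hadj, hNtm.1⟩
      · intro z hz e he f hf hze hzf
        rcases Set.mem_insert_iff.mp he with rfl | he'
        · rcases Set.mem_insert_iff.mp hf with rfl | hf'
          · rfl
          · exfalso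
            have hzq : z = ept q₀ L := by
              rcases Sym2.mem_iff.mp hze with h1 | h1
              · exact h1
              · exact absurd (h1 ▸ hz) hpQ
            exact hNsat ⟨f, hf', hzq ▸ hzf⟩
        · rcases Set.mem_insert_iff.mp hf with rfl | hf'
          · exfalso
            have hzq : z = ept q₀ L := by
              rcases Sym2.mem_iff.mp hzf with h1 | h1
              · exact h1
              · exact absurd (h1 ▸ hz) hpQ
            exact hNsat ⟨e, he', hzq ▸ hze⟩
          · exact hNtm.2.1 z hz e he' f hf' hze hzf
      · intro z hz
        by_cases hzp : z = p
        · subst hzp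
          rw [hstar, Set.ncard_insert_of_notMem (fun hc => haN hc.1)]
          omega
        · have huntouched : {e ∈ insert s(ept q₀ L, p) N | z ∈ e} = {e ∈ N | z ∈ e} := by
            ext f
            simp only [Set.mem_setOf_eq, Set.mem_insert_iff]
            constructor
            · rintro ⟨rfl | h1, hzf⟩
              · rcases Sym2.mem_iff.mp hzf with h2 | h2
                · exact absurd (h2 ▸ hqQ) hz
                · exact absurd h2 hzp
              · exact ⟨h1, hzf⟩
            · rintro ⟨h1, hzf⟩
              exact ⟨Or.inr h1, hzf⟩
          rw [huntouched]
          exact hNtm.2.2 z hz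
    have hcontra := hmax _ hN'tm
    rw [Set.ncard_insert_of_notMem haN, hNcard] at hcontra
    omega
  · rw [← hNdeg p hpQ, heqt]

lemma exists_max_tm (G : SimpleGraph V) (Q : Set V) (t : ℕ) :
    ∃ M, TM G Q t M ∧ ∀ N, TM G Q t N → N.ncard ≤ M.ncard := by
  have hempty : TM G Q t (∅ : Set (Sym2 V)) := by
    refine ⟨Set.empty_subset _, by simp, fun p _ => ?_⟩
    have : {e ∈ (∅ : Set (Sym2 V)) | p ∈ e} = ∅ := by simp
    simp [this]
  let S : Set ℕ := {n | ∃ M, TM G Q t M ∧ M.ncard = n}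
  have hne : S.Nonempty := ⟨0, ∅, hempty, Set.ncard_empty _⟩
  have hbdd : BddAbove S := by
    refine ⟨Nat.card (Sym2 V), ?_⟩
    rintro n ⟨M, _, rfl⟩
    exact le_trans (Set.ncard_le_ncard (Set.subset_univ M) Set.finite_univ)
      (le_of_eq (Set.ncard_univ _))
  obtain ⟨M, hM, hMc⟩ := Nat.sSup_mem hne hbdd
  exact ⟨M, hM, fun N hN => hMc ▸ le_csSup hbdd ⟨N, hN, rfl⟩⟩

open Classical in
noncomputable def pickQ (Q : Set V) (v₀ : V) (e : Sym2 V) : V :=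
  if h : ∃ z ∈ Q, z ∈ e then h.choose else v₀

open Classical in
lemma pickQ_spec {Q : Set V} {v₀ : V} {e : Sym2 V} (h : ∃ z ∈ Q, z ∈ e) :
    pickQ Q v₀ e ∈ Q ∧ pickQ Q v₀ e ∈ e := by
  rw [pickQ, dif_pos h]; exact h.choose_spec

open Classical in
noncomputable def pickP (Q : Set V) (v₀ : V) (e : Sym2 V) : V :=
  if h : ∃ z, z ∉ Q ∧ z ∈ e then h.choose else v₀

open Classical in
lemma pickP_spec {Q : Set V} {v₀ : V} {e : Sym2 V} (h : ∃ z, z ∉ Q ∧ z ∈ e) :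
    pickP Q v₀ e ∉ Q ∧ pickP Q v₀ e ∈ e := by
  rw [pickP, dif_pos h]; exact h.choose_spec

open Classical in
noncomputable def pickE (M : Set (Sym2 V)) (d : Sym2 V) (x : V) : Sym2 V :=
  if h : ∃ e ∈ M, x ∈ e then h.choose else d

open Classical in
lemma pickE_spec {M : Set (Sym2 V)} {d : Sym2 V} {x : V} (h : ∃ e ∈ M, x ∈ e) :
    pickE M d x ∈ M ∧ x ∈ pickE M d x := by
  rw [pickE, dif_pos h]; exact h.choose_spec

end Stmt5Aux

/-- expansion lemma with an unsaturated vertex. -/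
theorem stmt5 {V : Type} [Fintype V] (G : SimpleGraph V) (P Q : Set V)
    (hpart : P ∪ Q = Set.univ ∧ P ∩ Q = ∅)
    (hbip : ∀ u v : V, G.Adj u v → (u ∈ P ∧ v ∈ Q) ∨ (u ∈ Q ∧ v ∈ P))
    (t ℓ : ℕ) (ht : 0 < t)
    (hmaxmat : (∃ M : Set (Sym2 V), IsEdgeMatching G M ∧ M.ncard = ℓ) ∧
      ∀ M : Set (Sym2 V), IsEdgeMatching G M → M.ncard ≤ ℓ)
    (hQ : ℓ * t < Q.ncard)
    (hiso : ∀ q ∈ Q, ∃ u : V, G.Adj q u) :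
    ∃ (X Y : Set V) (w : V) (M : Set (Sym2 V)),
      X ⊆ P ∧ Y ⊆ Q ∧ X.Nonempty ∧ Y.Nonempty ∧ w ∈ Y ∧
      IsExpansion G t X Y M ∧
      (∀ y ∈ Y, ∀ z : V, G.Adj y z → z ∈ X) ∧
      ¬ Saturates M w := by
  classical
  obtain ⟨hPQuniv, hdisj⟩ := hpart
  have hPQ : ∀ x, x ∈ P → x ∈ Q → False := fun x h1 h2 =>
    Set.eq_empty_iff_forall_notMem.mp hdisj x ⟨h1, h2⟩
  obtain ⟨M, hM, hmax⟩ := Stmt5Aux.exists_max_tm G Q t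
  have hsplit : ∀ e, e ∈ G.edgeSet → ∃ a b, a ∈ P ∧ b ∈ Q ∧ e = s(a, b) := by
    intro e
    induction e using Sym2.ind with
    | _ a b =>
      intro he
      rw [SimpleGraph.mem_edgeSet] at he
      rcases hbip a b he with ⟨h1, h2⟩ | ⟨h1, h2⟩
      · exact ⟨a, b, h1, h2, rfl⟩
      · exact ⟨b, a, h2, h1, Sym2.eq_swap⟩
  have hQne : Q.Nonempty := by
    rcases Set.eq_empty_or_nonempty Q with h | h
    · rw [h, Set.ncard_empty] at hQ; omega
    · exact h
  obtain ⟨v₀, hv₀⟩ := hQne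
  have hfQ : ∀ e ∈ G.edgeSet, Stmt5Aux.pickQ Q v₀ e ∈ Q ∧ Stmt5Aux.pickQ Q v₀ e ∈ e ∧
      ∀ z ∈ Q, z ∈ e → z = Stmt5Aux.pickQ Q v₀ e := by
    intro e he
    obtain ⟨a, b, ha, hb, rfl⟩ := hsplit e he
    obtain ⟨h1, h2⟩ := Stmt5Aux.pickQ_spec (Q := Q) (v₀ := v₀) (e := s(a, b)) ⟨b, hb, by simp⟩
    have hub : ∀ z ∈ Q, z ∈ s(a, b) → z = b := by
      intro z hz hze
      rcases Sym2.mem_iff.mp hze with rfl | rfl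
      · exact (hPQ _ ha hz).elim
      · rfl
    have hqb := hub _ h1 h2
    exact ⟨h1, h2, fun z hz hze => (hub z hz hze).trans hqb.symm⟩
  have hfP : ∀ e ∈ G.edgeSet, (Stmt5Aux.pickP Q v₀ e ∉ Q ∧ Stmt5Aux.pickP Q v₀ e ∈ P) ∧
      Stmt5Aux.pickP Q v₀ e ∈ e ∧
      ∀ z, z ∉ Q → z ∈ e → z = Stmt5Aux.pickP Q v₀ e := by
    intro e he
    obtain ⟨a, b, ha, hb, rfl⟩ := hsplit e he
    obtain ⟨h1, h2⟩ := Stmt5Aux.pickP_spec (Q := Q) (v₀ := v₀) (e := s(a, b))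
      ⟨a, fun hc => hPQ a ha hc, by simp⟩
    have hub : ∀ z, z ∉ Q → z ∈ s(a, b) → z = a := by
      intro z hz hze
      rcases Sym2.mem_iff.mp hze with rfl | rfl
      · rfl
      · exact absurd hb hz
    have hqa := hub _ h1 h2
    refine ⟨⟨h1, by rw [hqa]; exact ha⟩, h2, fun z hz hze => (hub z hz hze).trans hqa.symm⟩
  -- the bound |M| ≤ ℓ * t
  have hMle : M.ncard ≤ ℓ * t := by
    set d : Sym2 V := s(v₀, v₀) with hd
    set Psat : Set V := {x | x ∉ Q ∧ ∃ e ∈ M, x ∈ e} with hPsatdef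
    have hce : ∀ x ∈ Psat, Stmt5Aux.pickE M d x ∈ M ∧ x ∈ Stmt5Aux.pickE M d x :=
      fun x hx => Stmt5Aux.pickE_spec hx.2
    have hceP : ∀ x ∈ Psat, x = Stmt5Aux.pickP Q v₀ (Stmt5Aux.pickE M d x) := fun x hx =>
      (hfP _ (hM.1 (hce x hx).1)).2.2 x hx.1 (hce x hx).2
    have hinj : Set.InjOn (Stmt5Aux.pickE M d) Psat := by
      intro x hx y hy hxy
      rw [hceP x hx, hceP y hy, hxy]
    have hM₀ : IsEdgeMatching G (Stmt5Aux.pickE M d '' Psat) := by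
      constructor
      · rintro e ⟨x, hx, rfl⟩
        exact hM.1 (hce x hx).1
      · rintro e he f hf hef z hze hzf
        obtain ⟨x, hx, rfl⟩ := he
        obtain ⟨y, hy, rfl⟩ := hf
        by_cases hzQ : z ∈ Q
        · exact hef (hM.2.1 z hzQ _ (hce x hx).1 _ (hce y hy).1 hze hzf)
        · have h1 : z = Stmt5Aux.pickP Q v₀ (Stmt5Aux.pickE M d x) :=
            (hfP _ (hM.1 (hce x hx).1)).2.2 z hzQ hze
          have h2 : z = Stmt5Aux.pickP Q v₀ (Stmt5Aux.pickE M d y) :=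
            (hfP _ (hM.1 (hce y hy).1)).2.2 z hzQ hzf
          have hxy : x = y := by rw [hceP x hx, hceP y hy, ← h1, ← h2]
          exact hef (by rw [hxy])
    have hPsatle : Psat.ncard ≤ ℓ := by
      have hb := hmaxmat.2 _ hM₀
      rwa [Set.ncard_image_of_injOn hinj] at hb
    have hcard1 : (Set.toFinite M).toFinset.card =
        ∑ x ∈ (Set.toFinite Psat).toFinset,
          ((Set.toFinite M).toFinset.filter (fun e => Stmt5Aux.pickP Q v₀ e = x)).card := by
      apply Finset.card_eq_sum_card_fiberwise
      intro e he
      rw [Finset.mem_coe, Set.Finite.mem_toFinset] at he ⊢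
      exact ⟨(hfP e (hM.1 he)).1.1, e, he, (hfP e (hM.1 he)).2.1⟩
    have hfible : ∀ x ∈ (Set.toFinite Psat).toFinset,
        ((Set.toFinite M).toFinset.filter (fun e => Stmt5Aux.pickP Q v₀ e = x)).card ≤ t := by
      intro x hx
      rw [Set.Finite.mem_toFinset] at hx
      have hsub : ((Set.toFinite M).toFinset.filter (fun e => Stmt5Aux.pickP Q v₀ e = x))
          ⊆ (Set.toFinite {e ∈ M | x ∈ e}).toFinset := by
        intro e he
        rw [Finset.mem_filter, Set.Finite.mem_toFinset] at he
        rw [Set.Finite.mem_toFinset]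
        refine ⟨he.1, ?_⟩
        rw [← he.2]
        exact (hfP e (hM.1 he.1)).2.1
      calc ((Set.toFinite M).toFinset.filter (fun e => Stmt5Aux.pickP Q v₀ e = x)).card
          ≤ (Set.toFinite {e ∈ M | x ∈ e}).toFinset.card := Finset.card_le_card hsub
        _ = {e ∈ M | x ∈ e}.ncard := (Set.ncard_eq_toFinset_card _ _).symm
        _ ≤ t := hM.2.2 x hx.1
    have hfin : M.ncard ≤ Psat.ncard * t := by
      rw [Set.ncard_eq_toFinset_card _ (Set.toFinite M),
        Set.ncard_eq_toFinset_card _ (Set.toFinite Psat), hcard1]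
      refine le_trans (Finset.sum_le_sum hfible) ?_
      rw [Finset.sum_const, smul_eq_mul]
    exact le_trans hfin (Nat.mul_le_mul_right t hPsatle)
  -- an unsaturated vertex q₀ of Q
  have hSM : {z ∈ Q | Saturates M z} = Stmt5Aux.pickQ Q v₀ '' M := by
    ext z
    constructor
    · rintro ⟨hzQ, e, he, hze⟩
      exact ⟨e, he, ((hfQ e (hM.1 he)).2.2 z hzQ hze).symm⟩
    · rintro ⟨e, he, rfl⟩
      exact ⟨(hfQ e (hM.1 he)).1, e, he, (hfQ e (hM.1 he)).2.1⟩
  have hSMcard : {z ∈ Q | Saturates M z}.ncard = M.ncard := by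
    rw [hSM]
    apply Set.ncard_image_of_injOn
    intro e he f hf hef
    exact hM.2.1 _ (hfQ e (hM.1 he)).1 e he f hf (hfQ e (hM.1 he)).2.1
      (hef.symm ▸ (hfQ f (hM.1 hf)).2.1)
  obtain ⟨q₀, hq₀Q, hq₀unsat⟩ : ∃ q₀ ∈ Q, ¬ Saturates M q₀ := by
    by_contra hc
    push_neg at hc
    have hsub : Q ⊆ {z ∈ Q | Saturates M z} := fun z hz => ⟨hz, hc z hz⟩
    have hle2 := Set.ncard_le_ncard hsub (Set.toFinite _)
    rw [hSMcard] at hle2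
    omega
  -- reachability, X and Y
  set Reach : V → Prop := fun z => ∃ L, Stmt5Aux.AC G M q₀ L ∧ Stmt5Aux.ept q₀ L = z
    with hReach
  set Y : Set V := {z | Reach z} with hYdef
  set X : Set V := {x | ∃ z, Reach z ∧ G.Adj z x} with hXdef
  have hYQ : Y ⊆ Q := by
    rintro z ⟨L, hL, rfl⟩
    exact (Stmt5Aux.ac_sets hbip hdisj hM.1 hq₀Q hL).1
  have hXP : X ⊆ P := by
    rintro x ⟨z, hz, hadjzx⟩
    have hzQ : z ∈ Q := hYQ hz
    rcases hbip _ _ hadjzx with ⟨h2, _⟩ | ⟨_, h3⟩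
    · exact (hPQ _ h2 hzQ).elim
    · exact h3
  have hq₀Y : q₀ ∈ Y := ⟨[], Stmt5Aux.AC.nil, rfl⟩
  have hXdeg : ∀ x ∈ X, {e ∈ M | x ∈ e}.ncard = t := by
    rintro x ⟨z, ⟨L, hL, rfl⟩, hadjzx⟩
    exact Stmt5Aux.reach_deg hbip hdisj hM hq₀Q hq₀unsat hmax hL hadjzx
  have hclose : ∀ x ∈ X, ∀ q', s(x, q') ∈ M → q' ∈ Y := by
    rintro x ⟨z, ⟨L, hL, rfl⟩, hadjzx⟩ q' hmem
    by_cases hqp : s(Stmt5Aux.ept q₀ L, x) ∈ M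
    · cases hL with
      | nil =>
        exact absurd ⟨_, hqp, by simp⟩ hq₀unsat
      | @cons L₂ p₂ z' h1 hadj' hne' hmem' =>
        have hz'Q : z' ∈ Q :=
          (Stmt5Aux.ac_sets hbip hdisj hM.1 hq₀Q (Stmt5Aux.AC.cons h1 hadj' hne' hmem')).1
        have hpx : p₂ = x := by
          have heq := hM.2.1 z' hz'Q _ hmem' _ hqp (by simp) (by simp)
          rw [Sym2.eq_iff] at heq
          rcases heq with ⟨h1', h2'⟩ | ⟨h1', h2'⟩
          · exact absurd h2' hadjzx.ne
          · exact h1'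
        exact ⟨(x, q') :: L₂, Stmt5Aux.AC.cons h1 (hpx ▸ hadj') (hpx ▸ hne') hmem, rfl⟩
    · exact ⟨(x, q') :: L, Stmt5Aux.AC.cons hL hadjzx hqp hmem, rfl⟩
  -- the expansion M'
  set M' : Set (Sym2 V) := {e ∈ M | ∃ x ∈ X, x ∈ e} with hM'def
  have hM'sub : M' ⊆ M := fun e he => he.1
  have hM'E : M' ⊆ G.edgeSet := fun e he => hM.1 he.1
  have hM'split : ∀ e ∈ M', Stmt5Aux.pickP Q v₀ e ∈ X ∧ Stmt5Aux.pickQ Q v₀ e ∈ Y ∧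
      e = s(Stmt5Aux.pickP Q v₀ e, Stmt5Aux.pickQ Q v₀ e) := by
    rintro e ⟨he, x, hxX, hxe⟩
    have hE := hM.1 he
    obtain ⟨a, b, ha, hb, heq⟩ := hsplit e hE
    have hfPa : Stmt5Aux.pickP Q v₀ e = a :=
      ((hfP e hE).2.2 a (fun hc => hPQ a ha hc) (by rw [heq]; simp)).symm
    have hfQb : Stmt5Aux.pickQ Q v₀ e = b :=
      ((hfQ e hE).2.2 b hb (by rw [heq]; simp)).symm
    have hxQ : x ∉ Q := fun hc => hPQ x (hXP hxX) hc
    have hxa : x = a := by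
      rw [← hfPa]
      exact (hfP e hE).2.2 x hxQ hxe
    refine ⟨?_, ?_, by rw [hfPa, hfQb]; exact heq⟩
    · rw [hfPa, ← hxa]; exact hxX
    · have hxb : s(x, b) ∈ M := by
        rw [hxa, ← heq]; exact he
      have hbY := hclose x hxX b hxb
      rw [hfQb]; exact hbY
  have hstar_eq : ∀ x ∈ X, {e ∈ M' | x ∈ e} = {e ∈ M | x ∈ e} := by
    intro x hx
    ext e
    constructor
    · rintro ⟨⟨he, _⟩, hxe⟩
      exact ⟨he, hxe⟩
    · rintro ⟨he, hxe⟩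
      exact ⟨⟨he, x, hx, hxe⟩, hxe⟩
  -- saturated vertices of Y
  have hsatY : {y ∈ Y | Saturates M' y} = Stmt5Aux.pickQ Q v₀ '' M' := by
    ext z
    constructor
    · rintro ⟨hzY, e, he, hze⟩
      exact ⟨e, he, ((hfQ e (hM'E he)).2.2 z (hYQ hzY) hze).symm⟩
    · rintro ⟨e, he, rfl⟩
      exact ⟨(hM'split e he).2.1, e, he, (hfQ e (hM'E he)).2.1⟩
  have hinjQ : Set.InjOn (Stmt5Aux.pickQ Q v₀) M' := by
    intro e he f hf hef
    exact hM.2.1 _ (hfQ e (hM'E he)).1 e (hM'sub he) f (hM'sub hf) (hfQ e (hM'E he)).2.1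
      (hef.symm ▸ (hfQ f (hM'E hf)).2.1)
  -- |M'| = t * |X|
  have hcard2 : (Set.toFinite M').toFinset.card =
      ∑ x ∈ (Set.toFinite X).toFinset,
        ((Set.toFinite M').toFinset.filter (fun e => Stmt5Aux.pickP Q v₀ e = x)).card := by
    apply Finset.card_eq_sum_card_fiberwise
    intro e he
    rw [Finset.mem_coe, Set.Finite.mem_toFinset] at he ⊢
    exact (hM'split e he).1
  have hfib : ∀ x ∈ (Set.toFinite X).toFinset,
      ((Set.toFinite M').toFinset.filter (fun e => Stmt5Aux.pickP Q v₀ e = x)).card = t := by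
    intro x hx
    rw [Set.Finite.mem_toFinset] at hx
    have hfeq : ((Set.toFinite M').toFinset.filter (fun e => Stmt5Aux.pickP Q v₀ e = x))
        = (Set.toFinite {e ∈ M | x ∈ e}).toFinset := by
      ext e
      rw [Finset.mem_filter, Set.Finite.mem_toFinset, Set.Finite.mem_toFinset]
      constructor
      · rintro ⟨heM', hpe⟩
        refine ⟨hM'sub heM', ?_⟩
        rw [← hpe]
        exact (hfP e (hM'E heM')).2.1
      · rintro ⟨heM, hxe⟩
        have hxQ : x ∉ Q := fun hc => hPQ x (hXP hx) hc
        exact ⟨⟨heM, x, hx, hxe⟩, ((hfP e (hM.1 heM)).2.2 x hxQ hxe).symm⟩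
    rw [hfeq, ← Set.ncard_eq_toFinset_card _ (Set.toFinite _)]
    exact hXdeg x hx
  have hM'card : M'.ncard = t * X.ncard := by
    rw [Set.ncard_eq_toFinset_card _ (Set.toFinite M'), hcard2,
      Finset.sum_congr rfl hfib, Finset.sum_const, smul_eq_mul,
      ← Set.ncard_eq_toFinset_card _ (Set.toFinite X), mul_comm]
  have hexp4 : {y ∈ Y | Saturates M' y}.ncard = t * X.ncard := by
    rw [hsatY, Set.ncard_image_of_injOn hinjQ, hM'card]
  obtain ⟨u, hu⟩ := hiso q₀ hq₀Q
  refine ⟨X, Y, q₀, M', hXP, hYQ, ⟨u, q₀, hq₀Y, hu⟩, ⟨q₀, hq₀Y⟩, hq₀Y,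
    ⟨hM'E, ?_, ?_, hexp4⟩, ?_, ?_⟩
  · intro e he
    exact ⟨Stmt5Aux.pickP Q v₀ e, (hM'split e he).1, Stmt5Aux.pickQ Q v₀ e,
      (hM'split e he).2.1, (hM'split e he).2.2⟩
  · intro x hx
    rw [hstar_eq x hx]
    exact hXdeg x hx
  · rintro y hy z hadjyz
    exact ⟨y, hy, hadjyz⟩
  · rintro ⟨e, he, hq₀e⟩
    exact hq₀unsat ⟨e, hM'sub he, hq₀e⟩
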